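/- Let Y ∈ Las_{2ℓ}(K) be a level-2ℓ Lasserre solution for the Directed Steiner Tree LP K on an ℓ-level graph, and fix a terminal s ∈ X. Then (a) Σ_{P ∈ Q(s)} y_P = 1, where Q(s) is the set of directed r–s paths and y_P is the entry of Y indexed by the edge set P; and (b) for every vertex v and every r–v path P', Σ_{P ∈ Q(s) : P' ⊆ P} y_P ≤ y_{P'}. -/

import Mathlib

open Finset

/-- The moment matrix of a vector `y` indexed by subsets, truncated at sets of size `≤ t`. -/
def momentMatrix {α : Type*} [Fintype α] [DecidableEq α] (y : Finset α → ℝ) (t : ℕ) :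
    Matrix {I : Finset α // I.card ≤ t} {I : Finset α // I.card ≤ t} ℝ :=
  fun I J => y (I.1 ∪ J.1)

/-- The shift operator `(a;β) * y` for a linear constraint `aᵀx ≥ β`. -/
def shiftVec {α ι : Type*} [Fintype α] [DecidableEq α]
    (A : ι → α → ℝ) (b : ι → ℝ) (ℓ : ι) (y : Finset α → ℝ) : Finset α → ℝ :=
  fun I => (∑ i, A ℓ i * y (insert i I)) - b ℓ * y I

/-- `y ∈ Las_t(K)` where `K = {x : A x ≥ b}`. -/
def IsLasserre {α ι : Type*} [Fintype α] [DecidableEq α]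
    (A : ι → α → ℝ) (b : ι → ℝ) (t : ℕ) (y : Finset α → ℝ) : Prop :=
  y ∅ = 1 ∧ (momentMatrix y (t + 1)).PosSemidef ∧
    ∀ ℓ : ι, (momentMatrix (shiftVec A b ℓ y) t).PosSemidef

/-- An `ℓ`-level Directed Steiner Tree instance: a directed graph on vertex set `V` with edge
set `E`, root `r`, terminal set `X`, whose vertices are arranged in levels
`V_0 = {r}, V_1, …, V_levels = X` with every edge going from one level to the next. -/
structure DSTInstance (V : Type*) [Fintype V] [DecidableEq V] where
  E : Finset (V × V)
  r : V
  X : Finset V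
  levels : ℕ
  level : V → ℕ
  level_le : ∀ v, level v ≤ levels
  level_root : ∀ v, level v = 0 ↔ v = r
  level_terminal : ∀ v, level v = levels ↔ v ∈ X
  edge_level : ∀ e ∈ E, level e.2 = level e.1 + 1

variable {V : Type*} [Fintype V] [DecidableEq V]

/-- LP variables of the Directed Steiner Tree LP: a capacity variable `y_e` for each edge
`e ∈ E` and a flow variable `f_{s,e}` for each terminal `s ∈ X` and edge `e ∈ E`. -/
def DSTVar (G : DSTInstance V) : Type _ :=
  {e : V × V // e ∈ G.E} ⊕ {p : V × (V × V) // p.1 ∈ G.X ∧ p.2 ∈ G.E}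

instance (G : DSTInstance V) : Fintype (DSTVar G) :=
  inferInstanceAs (Fintype ({e : V × V // e ∈ G.E} ⊕ {p : V × (V × V) // p.1 ∈ G.X ∧ p.2 ∈ G.E}))

instance (G : DSTInstance V) : DecidableEq (DSTVar G) :=
  inferInstanceAs (DecidableEq ({e : V × V // e ∈ G.E} ⊕ {p : V × (V × V) // p.1 ∈ G.X ∧ p.2 ∈ G.E}))

/-- Index type for the linear constraints of the Directed Steiner Tree LP: flow conservation
(for each terminal `s ∈ X` and vertex `v`, two inequalities forming an equality), capacity
constraints `f_{s,e} ≤ y_e`, indegree constraints `Σ_{e ∈ δ⁻(v)} y_e ≤ 1`, and the box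
constraints `0 ≤ x ≤ 1` for every variable. -/
def DSTCon (G : DSTInstance V) : Type _ :=
  (({s : V // s ∈ G.X} × V) × Bool) ⊕
  ({p : V × (V × V) // p.1 ∈ G.X ∧ p.2 ∈ G.E} ⊕
  (V ⊕ (DSTVar G × Bool)))

/-- Left-hand side coefficients of the Directed Steiner Tree LP constraints (as `a·x ≥ β`). -/
def dstA (G : DSTInstance V) : DSTCon G → DSTVar G → ℝ
  | Sum.inl ((s, v), d) => fun w =>
      (if d then (1 : ℝ) else -1) *
        (match w with
          | Sum.inl _ => 0
          | Sum.inr p =>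
              if p.1.1 = s.1 then
                (if p.1.2.1 = v then (1 : ℝ) else 0) - (if p.1.2.2 = v then (1 : ℝ) else 0)
              else 0)
  | Sum.inr (Sum.inl p) => fun w =>
      (match w with
        | Sum.inl e => if e.1 = p.1.2 then (1 : ℝ) else 0
        | Sum.inr q => if q.1 = p.1 then (-1 : ℝ) else 0)
  | Sum.inr (Sum.inr (Sum.inl v)) => fun w =>
      (match w with
        | Sum.inl e => if e.1.2 = v then (-1 : ℝ) else 0
        | Sum.inr _ => 0)
  | Sum.inr (Sum.inr (Sum.inr (w0, d))) => fun w =>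
      if w = w0 then (if d then (1 : ℝ) else -1) else 0

/-- Right-hand sides of the Directed Steiner Tree LP constraints (as `a·x ≥ β`). -/
def dstb (G : DSTInstance V) : DSTCon G → ℝ
  | Sum.inl ((s, v), d) =>
      (if d then (1 : ℝ) else -1) *
        (if v = G.r then 1 else if v = s.1 then -1 else 0)
  | Sum.inr (Sum.inl _) => 0
  | Sum.inr (Sum.inr (Sum.inl _)) => -1
  | Sum.inr (Sum.inr (Sum.inr (_, d))) => if d then (0 : ℝ) else -1

/-- `IsRPath G P v`: the edge set `P` is a directed path from the root `r` to `v` in `G`. -/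
inductive IsRPath (G : DSTInstance V) : Finset (V × V) → V → Prop
  | nil : IsRPath G ∅ G.r
  | cons {P : Finset (V × V)} {u v : V} :
      IsRPath G P u → (u, v) ∈ G.E → IsRPath G (insert (u, v) P) v

/-- The set of Lasserre variables corresponding to the capacity variables `y_e`, `e ∈ P`. -/
def edgeVars (G : DSTInstance V) (P : Finset (V × V)) : Finset (DSTVar G) :=
  ((Finset.univ : Finset {e : V × V // e ∈ G.E}).filter (fun e => e.1 ∈ P)).image Sum.inl

namespace DSTProof
open Finset
variable {V : Type*} [Fintype V] [DecidableEq V] {G : DSTInstance V}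

lemma level_r (G : DSTInstance V) : G.level G.r = 0 := (G.level_root G.r).2 rfl

lemma path_mem {P : Finset (V × V)} {v : V} (h : IsRPath G P v) :
    ∀ e ∈ P, e ∈ G.E ∧ G.level e.2 ≤ G.level v := by
  induction h with
  | nil => simp
  | @cons P u v h he ih =>
    intro e heP
    have hlv : G.level v = G.level u + 1 := G.edge_level (u, v) he
    rcases Finset.mem_insert.1 heP with rfl | hP
    · exact ⟨he, le_of_eq rfl⟩
    · exact ⟨(ih e hP).1, by have := (ih e hP).2; omega⟩

lemma path_card {P : Finset (V × V)} {v : V} (h : IsRPath G P v) : P.card = G.level v := by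
  induction h with
  | nil => simp [level_r]
  | @cons P u v h he ih =>
    have hlv : G.level v = G.level u + 1 := G.edge_level (u, v) he
    have hnm : (u, v) ∉ P := fun hm => by
      have := (path_mem h _ hm).2; simp only at this; omega
    rw [Finset.card_insert_of_notMem hnm, ih, hlv]

lemma path_notmem_last {P : Finset (V × V)} {u v : V} (h : IsRPath G P u)
    (he : (u, v) ∈ G.E) : (u, v) ∉ P := fun hm => by
  have h2 := (path_mem h _ hm).2
  have hlv : G.level v = G.level u + 1 := G.edge_level (u, v) he
  simp only at h2; omega

lemma path_root {P : Finset (V × V)} (h : IsRPath G P G.r) : P = ∅ := by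
  cases h with
  | nil => rfl
  | @cons P u v h he =>
    exfalso
    have := G.edge_level (u, G.r) he
    have := level_r G
    simp_all

lemma path_last {P : Finset (V × V)} {v : V} (h : IsRPath G P v) (hv : v ≠ G.r) :
    ∃ u P₀, IsRPath G P₀ u ∧ (u, v) ∈ G.E ∧ (u, v) ∉ P₀ ∧ P = insert (u, v) P₀ := by
  cases h with
  | nil => exact absurd rfl hv
  | @cons P u v h he => exact ⟨u, P, h, he, path_notmem_last h he, rfl⟩

lemma no_into_root {e : V × V} (he : e ∈ G.E) : e.2 ≠ G.r := fun h => by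
  have := G.edge_level e he
  rw [h, level_r] at this
  omega

lemma no_out_top {e : V × V} (he : e ∈ G.E) (h : G.level e.1 = G.levels) : False := by
  have h1 := G.edge_level e he
  have h2 := G.level_le e.2
  omega

lemma path_unique_ins {P₀ P₀' : Finset (V × V)} {u u' v : V}
    (h : IsRPath G P₀ u) (h' : IsRPath G P₀' u')
    (he : (u, v) ∈ G.E) (he' : (u', v) ∈ G.E)
    (heq : insert (u, v) P₀ = insert (u', v) P₀') : u = u' ∧ P₀ = P₀' := by
  have hlv : G.level v = G.level u + 1 := G.edge_level (u, v) he
  have hlv' : G.level v = G.level u' + 1 := G.edge_level (u', v) he'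
  have hmem : (u, v) ∈ insert (u', v) P₀' := heq ▸ Finset.mem_insert_self _ _
  have huu : u = u' := by
    rcases Finset.mem_insert.1 hmem with h1 | h1
    · exact congrArg Prod.fst h1
    · exfalso; have := (path_mem h' _ h1).2; simp only at this; omega
  subst huu
  refine ⟨rfl, ?_⟩
  have h1 : P₀ = (insert (u, v) P₀).erase (u, v) :=
    (Finset.erase_insert (path_notmem_last h he)).symm
  have h2 : P₀' = (insert (u, v) P₀').erase (u, v) :=
    (Finset.erase_insert (path_notmem_last h' he')).symm
  rw [h1, h2, heq]

end DSTProof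
namespace DSTProof
open Finset
variable {V : Type*} [Fintype V] [DecidableEq V]

abbrev Esub (G : DSTInstance V) := {e : V × V // e ∈ G.E}
abbrev Fsub (G : DSTInstance V) := {p : V × (V × V) // p.1 ∈ G.X ∧ p.2 ∈ G.E}

variable {G : DSTInstance V}

def fvar (G : DSTInstance V) (s : V) (hs : s ∈ G.X) (e : Esub G) : DSTVar G :=
  Sum.inr ⟨(s, e.1), hs, e.2⟩

def fvars (G : DSTInstance V) (s : V) (hs : s ∈ G.X) (P : Finset (V × V)) :
    Finset (DSTVar G) :=
  (univ.filter (fun e : Esub G => e.1 ∈ P)).image (fvar G s hs)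

variable {s : V} {hs : s ∈ G.X}

lemma fvar_injective : Function.Injective (fvar G s hs) := by
  intro a b h
  simp only [fvar] at h
  injection h with h
  have h2 := congrArg Subtype.val h
  exact Subtype.ext (congrArg Prod.snd h2)

lemma mem_fvars {x : DSTVar G} {P : Finset (V × V)} :
    x ∈ fvars G s hs P ↔ ∃ e : Esub G, e.1 ∈ P ∧ fvar G s hs e = x := by
  simp [fvars]

lemma fvar_mem_fvars {e : Esub G} {P : Finset (V × V)} (h : e.1 ∈ P) :
    fvar G s hs e ∈ fvars G s hs P := mem_fvars.2 ⟨e, h, rfl⟩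

lemma fvars_empty : fvars G s hs ∅ = ∅ := by simp [fvars]

lemma fvars_insert (e : Esub G) (P : Finset (V × V)) :
    fvars G s hs (insert e.1 P) = insert (fvar G s hs e) (fvars G s hs P) := by
  ext x
  simp only [mem_fvars, Finset.mem_insert]
  constructor
  · rintro ⟨e', he', rfl⟩
    rcases he' with h | h
    · exact Or.inl (by rw [Subtype.ext h])
    · exact Or.inr ⟨e', h, rfl⟩
  · rintro (rfl | ⟨e', he', rfl⟩)
    · exact ⟨e, Or.inl rfl, rfl⟩
    · exact ⟨e', Or.inr he', rfl⟩

lemma fvars_insert' (e : V × V) (hee : e ∈ G.E) (P : Finset (V × V)) :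
    fvars G s hs (insert e P) = insert (fvar G s hs ⟨e, hee⟩) (fvars G s hs P) :=
  fvars_insert ⟨e, hee⟩ P

lemma fvars_card (P : Finset (V × V)) : (fvars G s hs P).card ≤ P.card := by
  refine le_trans (Finset.card_image_le) ?_
  refine Finset.card_le_card_of_injOn Subtype.val (fun e he => (Finset.mem_filter.1 he).2) ?_
  intro a _ b _ h
  exact Subtype.ext h

lemma mem_edgeVars_iff {x : DSTVar G} {P : Finset (V × V)} :
    x ∈ edgeVars G P ↔ ∃ e : Esub G, e.1 ∈ P ∧ (Sum.inl e : DSTVar G) = x := by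
  have : edgeVars G P = (univ.filter (fun e : Esub G => e.1 ∈ P)).image
      (fun e : Esub G => (Sum.inl e : DSTVar G)) := rfl
  exact Finset.mem_image.trans (by simp only [Finset.mem_filter, Finset.mem_univ, true_and]; exact Iff.rfl)

lemma mem_edgeVars {e : Esub G} {P : Finset (V × V)} :
    (Sum.inl e : DSTVar G) ∈ edgeVars G P ↔ e.1 ∈ P := by
  refine mem_edgeVars_iff.trans ?_
  constructor
  · rintro ⟨e', he', h⟩
    cases Sum.inl_injective h
    exact he'
  · exact fun h => ⟨e, h, rfl⟩

lemma edgeVars_empty : edgeVars G ∅ = ∅ := by ext x; simp [mem_edgeVars_iff]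

lemma edgeVars_insert (e : Esub G) (P : Finset (V × V)) :
    edgeVars G (insert e.1 P) = insert (Sum.inl e) (edgeVars G P) := by
  ext x
  refine (mem_edgeVars_iff.trans ?_).trans
    (Finset.mem_insert.trans (or_congr Iff.rfl mem_edgeVars_iff)).symm
  simp only [Finset.mem_insert]
  constructor
  · rintro ⟨e', he', rfl⟩
    rcases he' with h | h
    · exact Or.inl (by rw [Subtype.ext h])
    · exact Or.inr ⟨e', h, rfl⟩
  · rintro (rfl | ⟨e', he', rfl⟩)
    · exact ⟨e, Or.inl rfl, rfl⟩
    · exact ⟨e', Or.inr he', rfl⟩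

lemma edgeVars_insert' (e : V × V) (hee : e ∈ G.E) (P : Finset (V × V)) :
    edgeVars G (insert e P) = insert (Sum.inl ⟨e, hee⟩) (edgeVars G P) :=
  edgeVars_insert ⟨e, hee⟩ P

lemma edgeVars_card (P : Finset (V × V)) : (edgeVars G P).card ≤ P.card := by
  refine le_trans (Finset.card_image_le) ?_
  refine Finset.card_le_card_of_injOn Subtype.val (fun e he => (Finset.mem_filter.1 he).2) ?_
  intro a _ b _ h
  exact Subtype.ext h

lemma edgeVars_mono {P Q : Finset (V × V)} (h : P ⊆ Q) : edgeVars G P ⊆ edgeVars G Q := by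
  intro x hx
  simp only [mem_edgeVars_iff, Finset.mem_filter, Finset.mem_univ, true_and] at hx ⊢
  obtain ⟨e, he, rfl⟩ := hx
  exact ⟨e, h he, rfl⟩

lemma edgeVars_union (P Q : Finset (V × V)) :
    edgeVars G (P ∪ Q) = edgeVars G P ∪ edgeVars G Q := by
  ext x
  simp only [mem_edgeVars_iff, Finset.mem_filter, Finset.mem_univ, true_and,
    Finset.mem_union]
  constructor
  · rintro ⟨e, he, rfl⟩
    rcases he with h | h
    · exact Or.inl ⟨e, h, rfl⟩
    · exact Or.inr ⟨e, h, rfl⟩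
  · rintro (⟨e, he, rfl⟩ | ⟨e, he, rfl⟩)
    · exact ⟨e, Or.inl he, rfl⟩
    · exact ⟨e, Or.inr he, rfl⟩

lemma yvar_mem_edgeVars {e : Esub G} {P : Finset (V × V)} (h : e.1 ∈ P) :
    (Sum.inl e : DSTVar G) ∈ edgeVars G P := mem_edgeVars.2 h

end DSTProof
namespace DSTProof
open Finset
variable {V : Type*} [Fintype V] [DecidableEq V] {G : DSTInstance V}

lemma psd_diag {n : Type*} [Fintype n] [DecidableEq n] {M : Matrix n n ℝ}
    (h : M.PosSemidef) (i : n) : 0 ≤ M i i := by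
  have h2 := h.dotProduct_mulVec_nonneg (Pi.single i 1)
  simpa [Matrix.mulVec, dotProduct, Pi.single_apply, ite_mul, mul_ite] using h2

variable {Y : Finset (DSTVar G) → ℝ}

lemma cond (hY : IsLasserre (dstA G) (dstb G) (2 * G.levels) Y) (con : DSTCon G)
    {I : Finset (DSTVar G)} (hI : I.card ≤ 2 * G.levels) :
    dstb G con * Y I ≤ ∑ w : DSTVar G, dstA G con w * Y (insert w I) := by
  have h := psd_diag (hY.2.2 con) ⟨I, hI⟩
  simp only [momentMatrix, Finset.union_self, shiftVec] at h
  linarith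

lemma sum_dstvar (f : DSTVar G → ℝ) :
    ∑ w : DSTVar G, f w
      = ∑ e : Esub G, f (Sum.inl e) + ∑ p : Fsub G, f (Sum.inr p) :=
  Fintype.sum_sum_type f

lemma nonneg_insert (hY : IsLasserre (dstA G) (dstb G) (2 * G.levels) Y)
    (w : DSTVar G) {I : Finset (DSTVar G)} (hI : I.card ≤ 2 * G.levels) :
    0 ≤ Y (insert w I) := by
  have h := cond hY (Sum.inr (Sum.inr (Sum.inr (w, true)))) hI
  simpa [dstA, dstb, ite_mul, Finset.sum_ite_eq', mem_univ] using h

lemma mono_insert (hY : IsLasserre (dstA G) (dstb G) (2 * G.levels) Y)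
    (w : DSTVar G) {I : Finset (DSTVar G)} (hI : I.card ≤ 2 * G.levels) :
    Y (insert w I) ≤ Y I := by
  have h := cond hY (Sum.inr (Sum.inr (Sum.inr (w, false)))) hI
  simp only [dstA, dstb, ite_mul, neg_mul, one_mul, zero_mul,
    Finset.sum_ite_eq', mem_univ, if_true, Bool.false_eq_true, if_false] at h
  linarith

end DSTProof
namespace DSTProof
open Finset
variable {V : Type*} [Fintype V] [DecidableEq V] {G : DSTInstance V}
variable {Y : Finset (DSTVar G) → ℝ}

lemma capacity (hY : IsLasserre (dstA G) (dstb G) (2 * G.levels) Y)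
    {s : V} (hs : s ∈ G.X) (e : Esub G) {I : Finset (DSTVar G)}
    (hI : I.card ≤ 2 * G.levels) :
    Y (insert (fvar G s hs e) I) ≤ Y (insert (Sum.inl e) I) := by
  have h := cond hY (Sum.inr (Sum.inl ⟨(s, e.1), hs, e.2⟩)) hI
  rw [sum_dstvar] at h
  have h1 : ∀ e' : Esub G,
      dstA G (Sum.inr (Sum.inl ⟨(s, e.1), hs, e.2⟩)) (Sum.inl e') * Y (insert (Sum.inl e') I)
        = if e' = e then Y (insert (Sum.inl e') I) else 0 := by
    intro e'
    show (if e'.1 = e.1 then (1:ℝ) else 0) * _ = _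
    by_cases hh : e' = e
    · subst hh; simp
    · rw [if_neg (fun hc => hh (Subtype.ext hc)), if_neg hh, zero_mul]
  have h2 : ∀ q : Fsub G,
      dstA G (Sum.inr (Sum.inl ⟨(s, e.1), hs, e.2⟩)) (Sum.inr q) * Y (insert (Sum.inr q) I)
        = if q = (⟨(s, e.1), hs, e.2⟩ : Fsub G) then -Y (@insert (DSTVar G) _ _ (Sum.inr q) I)
          else 0 := by
    intro q
    show (if q.1 = (s, e.1) then (-1:ℝ) else 0) * _ = _
    by_cases hh : q = (⟨(s, e.1), hs, e.2⟩ : Fsub G)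
    · subst hh; simp; rfl
    · rw [if_neg (fun hc => hh (Subtype.ext hc)), if_neg hh, zero_mul]
  erw [Finset.sum_congr rfl (fun x _ => h1 x), Finset.sum_congr rfl (fun x _ => h2 x),
    Finset.sum_ite_eq' univ e, Finset.sum_ite_eq' univ (⟨(s, e.1), hs, e.2⟩ : Fsub G)] at h
  simp only [mem_univ, if_true, dstb, zero_mul] at h
  have : fvar G s hs e = (Sum.inr ⟨(s, e.1), hs, e.2⟩ : DSTVar G) := rfl
  rw [this]
  linarith

lemma indeg (hY : IsLasserre (dstA G) (dstb G) (2 * G.levels) Y)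
    (v : V) {I : Finset (DSTVar G)} (hI : I.card ≤ 2 * G.levels) :
    ∑ e ∈ univ.filter (fun e : Esub G => e.1.2 = v), Y (insert (Sum.inl e) I) ≤ Y I := by
  have h := cond hY (Sum.inr (Sum.inr (Sum.inl v))) hI
  rw [sum_dstvar] at h
  have h1 : ∀ e' : Esub G,
      dstA G (Sum.inr (Sum.inr (Sum.inl v))) (Sum.inl e') * Y (insert (Sum.inl e') I)
        = if e'.1.2 = v then -Y (insert (Sum.inl e') I) else 0 := by
    intro e'
    show (if e'.1.2 = v then (-1:ℝ) else 0) * _ = _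
    split <;> ring
  have h2 : ∀ q : Fsub G,
      dstA G (Sum.inr (Sum.inr (Sum.inl v))) (Sum.inr q) * Y (insert (Sum.inr q) I) = 0 := by
    intro q
    show (0:ℝ) * _ = 0
    ring
  erw [Finset.sum_congr rfl (fun x _ => h1 x), Finset.sum_congr rfl (fun x _ => h2 x)] at h
  simp only [Finset.sum_const_zero, add_zero, dstb] at h
  rw [← Finset.sum_filter] at h
  rw [Finset.sum_neg_distrib] at h
  linarith

lemma conserv (hY : IsLasserre (dstA G) (dstb G) (2 * G.levels) Y)
    {s : V} (hs : s ∈ G.X) (v : V) {I : Finset (DSTVar G)}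
    (hI : I.card ≤ 2 * G.levels) :
    ∑ e ∈ univ.filter (fun e : Esub G => e.1.1 = v), Y (insert (fvar G s hs e) I)
      - ∑ e ∈ univ.filter (fun e : Esub G => e.1.2 = v), Y (insert (fvar G s hs e) I)
    = (if v = G.r then 1 else if v = s then -1 else 0) * Y I := by
  set S : ℝ := ∑ e ∈ univ.filter (fun e : Esub G => e.1.1 = v), Y (insert (fvar G s hs e) I)
      - ∑ e ∈ univ.filter (fun e : Esub G => e.1.2 = v), Y (insert (fvar G s hs e) I) with hS
  have key : ∀ d : Bool,
      ∑ w : DSTVar G, dstA G (Sum.inl ((⟨s, hs⟩, v), d)) w * Y (insert w I)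
        = (if d then (1:ℝ) else -1) * S := by
    intro d
    rw [sum_dstvar]
    have h1 : ∀ e' : Esub G,
        dstA G (Sum.inl ((⟨s, hs⟩, v), d)) (Sum.inl e') * Y (insert (Sum.inl e') I) = 0 := by
      intro e'
      show ((if d then (1:ℝ) else -1) * 0) * _ = 0
      ring
    have h2 : ∀ q : Fsub G,
        dstA G (Sum.inl ((⟨s, hs⟩, v), d)) (Sum.inr q) * Y (insert (Sum.inr q) I)
          = (if d then (1:ℝ) else -1) *
            ((if q.1.1 = s then ((if q.1.2.1 = v then (1:ℝ) else 0)
                - (if q.1.2.2 = v then 1 else 0)) else 0) * Y (insert (Sum.inr q) I)) := by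
      intro q
      show ((if d then (1:ℝ) else -1) * _) * _ = _
      ring
    erw [Finset.sum_congr rfl (fun x _ => h1 x), Finset.sum_congr rfl (fun x _ => h2 x)]
    rw [Finset.sum_const_zero, zero_add, ← Finset.mul_sum]
    congr 1
    -- T = S
    have hp : ∀ q ∈ (univ : Finset (Fsub G)),
        (if q.1.1 = s then ((if q.1.2.1 = v then (1:ℝ) else 0)
          - (if q.1.2.2 = v then 1 else 0)) else 0) * Y (insert (Sum.inr q) I) ≠ 0
          → q.1.1 = s := by
      intro q _ hq
      by_contra hc
      rw [if_neg hc, zero_mul] at hq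
      exact hq rfl
    rw [← Finset.sum_filter_of_ne hp]
    refine Eq.trans (Finset.sum_nbij' (i := fun q : Fsub G => (⟨q.1.2, q.2.2⟩ : Esub G))
        (j := fun e : Esub G => (⟨(s, e.1), hs, e.2⟩ : Fsub G))
        (t := univ)
        (g := fun e : Esub G => ((if e.1.1 = v then (1:ℝ) else 0)
          - (if e.1.2 = v then 1 else 0)) * Y (insert (fvar G s hs e) I))
        (fun a _ => mem_univ _) ?_ ?_ ?_ ?_) ?_
    · intro q _
      simp only [Finset.mem_filter, mem_univ, true_and]
    · intro q hq
      simp only [Finset.mem_filter, mem_univ, true_and] at hq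
      apply Subtype.ext
      show (s, q.1.2) = q.1
      rw [← hq]
    · intro e _
      rfl
    · intro q hq
      simp only [Finset.mem_filter, mem_univ, true_and] at hq
      rw [if_pos hq]
      have : (Sum.inr q : DSTVar G) = fvar G s hs (⟨q.1.2, q.2.2⟩ : Esub G) := by
        apply congrArg
        apply Subtype.ext
        show q.1 = (s, q.1.2)
        rw [← hq]
      rw [this]; rfl
    · rw [hS]
      rw [Finset.sum_congr rfl (fun e _ => sub_mul ((if e.1.1 = v then (1:ℝ) else 0)) _ _)]
      rw [Finset.sum_sub_distrib]
      congr 1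
      · simp only [ite_mul, one_mul, zero_mul]
        rw [← Finset.sum_filter]
      · simp only [ite_mul, one_mul, zero_mul]
        rw [← Finset.sum_filter]
  have ht := cond hY (Sum.inl ((⟨s, hs⟩, v), true)) hI
  have hf := cond hY (Sum.inl ((⟨s, hs⟩, v), false)) hI
  rw [key true] at ht
  rw [key false] at hf
  simp only [dstb, if_true, Bool.false_eq_true, if_false, one_mul, neg_mul, neg_one_mul] at ht hf
  show S = _
  linarith

end DSTProof
namespace DSTProof
open Finset
variable {V : Type*} [Fintype V] [DecidableEq V] {G : DSTInstance V}
variable {Y : Finset (DSTVar G) → ℝ}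

lemma nonneg (hY : IsLasserre (dstA G) (dstb G) (2 * G.levels) Y)
    {J : Finset (DSTVar G)} (hJ : J.card ≤ 2 * G.levels + 1) : 0 ≤ Y J := by
  rcases Finset.eq_empty_or_nonempty J with rfl | ⟨w, hw⟩
  · rw [hY.1]; norm_num
  · rw [← Finset.insert_erase hw]
    apply nonneg_insert hY
    have := Finset.card_erase_of_mem hw
    omega

lemma mono_union (hY : IsLasserre (dstA G) (dstb G) (2 * G.levels) Y) :
    ∀ T A : Finset (DSTVar G), (A ∪ T).card ≤ 2 * G.levels + 1 → Y (A ∪ T) ≤ Y A := by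
  intro T
  induction T using Finset.induction_on with
  | empty => intro A h; rw [Finset.union_empty]
  | @insert w T hw ih =>
    intro A h
    by_cases hwA : w ∈ A ∪ T
    · have h1 : A ∪ insert w T = A ∪ T := by
        rw [Finset.union_insert, Finset.insert_eq_self.2 hwA]
      rw [h1]
      exact ih A (by rw [h1] at h; exact h)
    · have h1 : A ∪ insert w T = insert w (A ∪ T) := Finset.union_insert _ _ _
      have hcard : (A ∪ T).card ≤ 2 * G.levels := by
        have h2 : (insert w (A ∪ T)).card = (A ∪ T).card + 1 :=
          Finset.card_insert_of_notMem hwA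
        rw [h1, h2] at h
        omega
      rw [h1]
      exact le_trans (mono_insert hY w hcard) (ih A (by omega))

lemma mono (hY : IsLasserre (dstA G) (dstb G) (2 * G.levels) Y)
    {A B : Finset (DSTVar G)} (hAB : A ⊆ B) (hB : B.card ≤ 2 * G.levels + 1) :
    Y B ≤ Y A := by
  have h1 : A ∪ (B \ A) = B := Finset.union_sdiff_of_subset hAB
  rw [← h1]
  exact mono_union hY _ _ (by rw [h1]; exact hB)

lemma kill (hY : IsLasserre (dstA G) (dstb G) (2 * G.levels) Y)
    {s : V} (hs : s ∈ G.X) {J : Finset (DSTVar G)} (hJ : J.card ≤ 2 * G.levels)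
    {e0 : Esub G} (hbig : Y J ≤ Y (insert (Sum.inl e0) J)) :
    ∀ e : Esub G, e.1.2 = e0.1.2 → e ≠ e0 → Y (insert (fvar G s hs e) J) = 0 := by
  intro e hev hne
  have hind := indeg hY (e0.1.2) hJ
  have he0mem : e0 ∈ univ.filter (fun e : Esub G => e.1.2 = e0.1.2) := by simp
  rw [← Finset.sum_erase_add _ _ he0mem] at hind
  have hnn : ∀ x ∈ (univ.filter (fun e : Esub G => e.1.2 = e0.1.2)).erase e0,
      0 ≤ Y (insert (Sum.inl x) J) := fun x _ => nonneg_insert hY _ hJ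
  have hmem : e ∈ (univ.filter (fun e' : Esub G => e'.1.2 = e0.1.2)).erase e0 := by
    simp [hne, hev]
  have hle := Finset.single_le_sum hnn hmem
  have hip : 0 ≤ Y (insert (Sum.inl e) J) := nonneg_insert hY (Sum.inl e : DSTVar G) hJ
  have hy : Y (insert (Sum.inl e) J) = 0 := by linarith
  have hcap := capacity hY hs e hJ
  have hnn2 := nonneg_insert hY (fvar G s hs e) hJ
  linarith

lemma inSum_eq (hY : IsLasserre (dstA G) (dstb G) (2 * G.levels) Y)
    {s : V} (hs : s ∈ G.X) {J : Finset (DSTVar G)} (hJ : J.card ≤ 2 * G.levels)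
    {e0 : Esub G} (hbig : Y J ≤ Y (insert (Sum.inl e0) J)) :
    ∑ e ∈ univ.filter (fun e : Esub G => e.1.2 = e0.1.2), Y (insert (fvar G s hs e) J)
      = Y (insert (fvar G s hs e0) J) := by
  apply Finset.sum_eq_single_of_mem e0 (by simp)
  intro e he hne
  exact kill hY hs hJ hbig e (Finset.mem_filter.1 he).2 hne

lemma step (hY : IsLasserre (dstA G) (dstb G) (2 * G.levels) Y)
    {s : V} (hs : s ∈ G.X) {J : Finset (DSTVar G)} (hJ : J.card ≤ 2 * G.levels)
    (e0 : Esub G) (hyJ : (Sum.inl e0 : DSTVar G) ∈ J)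
    (hseed : e0.1.2 = s ∨ ∃ eo : Esub G, eo.1.1 = e0.1.2 ∧ fvar G s hs eo ∈ J) :
    Y (insert (fvar G s hs e0) J) = Y J := by
  have hvr : e0.1.2 ≠ G.r := no_into_root e0.2
  have hbig : Y J ≤ Y (insert (Sum.inl e0) J) :=
    le_of_eq (congrArg Y (Finset.insert_eq_self.2 hyJ)).symm
  have hin := inSum_eq hY hs hJ hbig (s := s)
  have hcons := conserv hY hs e0.1.2 hJ (Y := Y)
  rw [if_neg hvr] at hcons
  by_cases hvs : e0.1.2 = s
  · rw [if_pos hvs] at hcons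
    have hout : ∑ e ∈ univ.filter (fun e : Esub G => e.1.1 = e0.1.2),
        Y (insert (fvar G s hs e) J) = 0 := by
      apply Finset.sum_eq_zero
      intro e he
      exact absurd ((G.level_terminal s).2 hs ▸ by
        rw [(Finset.mem_filter.1 he).2, hvs] : G.level e.1.1 = G.levels)
        (fun h => no_out_top e.2 h)
    rw [hout, hin] at hcons
    linarith
  · obtain ⟨eo, heo, hfo⟩ := hseed.resolve_left hvs
    rw [if_neg hvs, zero_mul] at hcons
    rw [hin] at hcons
    have hmemo : eo ∈ univ.filter (fun e : Esub G => e.1.1 = e0.1.2) := by simp [heo]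
    have h1 : Y (insert (fvar G s hs eo) J) = Y J :=
      congrArg Y (Finset.insert_eq_self.2 hfo)
    have hge := Finset.single_le_sum
      (fun x (_ : x ∈ univ.filter (fun e : Esub G => e.1.1 = e0.1.2)) =>
        nonneg_insert hY (fvar G s hs x) hJ) hmemo
    have hmono := mono_insert hY (fvar G s hs e0) hJ
    linarith

lemma stepOut (hY : IsLasserre (dstA G) (dstb G) (2 * G.levels) Y)
    {s : V} (hs : s ∈ G.X) {J : Finset (DSTVar G)} (hJ : J.card ≤ 2 * G.levels)
    (u : V) (hus : u ≠ s)
    (hseed : u = G.r ∨ ∃ ei : Esub G, ei.1.2 = u ∧ fvar G s hs ei ∈ J) :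
    ∑ e ∈ univ.filter (fun e : Esub G => e.1.1 = u), Y (insert (fvar G s hs e) J) = Y J := by
  have hcons := conserv hY hs u hJ (Y := Y)
  by_cases hur : u = G.r
  · rw [if_pos hur, one_mul] at hcons
    have hin0 : ∑ e ∈ univ.filter (fun e : Esub G => e.1.2 = u),
        Y (insert (fvar G s hs e) J) = 0 := by
      apply Finset.sum_eq_zero
      intro e he
      exact absurd ((Finset.mem_filter.1 he).2.trans hur) (no_into_root e.2)
    rw [hin0, sub_zero] at hcons
    exact hcons
  · obtain ⟨ei, hei, hfi⟩ := hseed.resolve_left hur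
    rw [if_neg hur, if_neg hus, zero_mul] at hcons
    have hbig : Y J ≤ Y (insert (Sum.inl ei) J) := by
      have hcap := capacity hY hs ei hJ
      rw [Finset.insert_eq_self.2 hfi] at hcap
      exact hcap
    have hin := inSum_eq hY hs hJ hbig (s := s)
    rw [hei] at hin
    have hfeq : Y (insert (fvar G s hs ei) J) = Y J :=
      congrArg Y (Finset.insert_eq_self.2 hfi)
    rw [hin, hfeq] at hcons
    linarith

lemma term_kill (hY : IsLasserre (dstA G) (dstb G) (2 * G.levels) Y)
    {s : V} (hs : s ∈ G.X) {I : Finset (DSTVar G)} {v : V} (hv : v ≠ s)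
    (hlv : G.level v = G.levels) {P : Finset (V × V)} (hP : IsRPath G P v)
    (hcard : (I ∪ fvars G s hs P).card ≤ 2 * G.levels) :
    Y (I ∪ fvars G s hs P) = 0 := by
  have hvr : v ≠ G.r := by
    intro h
    apply hv
    have h0 : G.level v = 0 := h ▸ level_r G
    have hsl : G.level s = G.levels := (G.level_terminal s).2 hs
    have : s = G.r := (G.level_root s).1 (by omega)
    rw [h, this]
  obtain ⟨u, P₀, hP₀, he, hnm, rfl⟩ := path_last hP hvr
  set J := I ∪ fvars G s hs (insert (u, v) P₀) with hJdef
  have hcons := conserv hY hs v hcard (Y := Y) (I := J)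
  rw [if_neg hvr, if_neg hv, zero_mul] at hcons
  have hout : ∑ e ∈ univ.filter (fun e : Esub G => e.1.1 = v),
      Y (insert (fvar G s hs e) J) = 0 := by
    apply Finset.sum_eq_zero
    intro e he'
    exact absurd ((Finset.mem_filter.1 he').2.symm ▸ hlv : G.level e.1.1 = G.levels)
      (fun h => no_out_top e.2 h)
  rw [hout] at hcons
  have hmem : (⟨(u, v), he⟩ : Esub G) ∈ univ.filter (fun e : Esub G => e.1.2 = v) := by simp
  have hterm : Y (insert (fvar G s hs ⟨(u, v), he⟩) J) = Y J :=
    congrArg Y (Finset.insert_eq_self.2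
      (Finset.mem_union_right _ (fvar_mem_fvars (Finset.mem_insert_self _ _))))
  have h1 := Finset.single_le_sum
    (fun x (_ : x ∈ univ.filter (fun e : Esub G => e.1.2 = v)) =>
      nonneg_insert hY (fvar G s hs x) hcard) hmem
  have h2 := nonneg hY (J := J) (by omega)
  linarith

lemma back (hY : IsLasserre (dstA G) (dstb G) (2 * G.levels) Y)
    {s : V} (hs : s ∈ G.X) {P : Finset (V × V)} {v : V} (hP : IsRPath G P v) :
    ∀ J : Finset (DSTVar G), J.card + P.card ≤ 2 * G.levels →
      (∀ e : Esub G, e.1 ∈ P → (Sum.inl e : DSTVar G) ∈ J) →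
      (v = s ∨ ∃ eo : Esub G, eo.1.1 = v ∧ fvar G s hs eo ∈ J) →
      Y (J ∪ fvars G s hs P) = Y J := by
  induction hP with
  | nil => intro J _ _ _; rw [fvars_empty, Finset.union_empty]
  | @cons P u v hP he ih =>
    intro J hcard hmemY hseed
    have hnm : (u, v) ∉ P := path_notmem_last hP he
    have hcard1 : (insert (u, v) P).card = P.card + 1 := Finset.card_insert_of_notMem hnm
    have hstep : Y (insert (fvar G s hs ⟨(u, v), he⟩) J) = Y J := by
      refine step hY hs (by omega) ⟨(u, v), he⟩
        (hmemY ⟨(u, v), he⟩ (Finset.mem_insert_self _ _)) ?_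
      rcases hseed with h | h
      · exact Or.inl h
      · exact Or.inr h
    have hcard2 : (insert (fvar G s hs ⟨(u, v), he⟩) J).card + P.card ≤ 2 * G.levels := by
      have := Finset.card_insert_le (fvar G s hs ⟨(u, v), he⟩) J
      omega
    have hih := ih (insert (fvar G s hs ⟨(u, v), he⟩) J) hcard2
      (fun e heP => Finset.mem_insert_of_mem (hmemY e (Finset.mem_insert_of_mem heP)))
      (Or.inr ⟨⟨(u, v), he⟩, rfl, Finset.mem_insert_self _ _⟩)
    have hsets : J ∪ fvars G s hs (insert (u, v) P)
        = insert (fvar G s hs ⟨(u, v), he⟩) J ∪ fvars G s hs P := by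
      rw [fvars_insert' (u, v) he, Finset.union_insert, ← Finset.insert_union]
    rw [hsets, hih, hstep]

lemma swap (hY : IsLasserre (dstA G) (dstb G) (2 * G.levels) Y)
    {s : V} (hs : s ∈ G.X) :
    ∀ P : Finset (V × V), (∀ e ∈ P, e ∈ G.E) → ∀ Q : Finset (V × V),
      P.card + Q.card ≤ 2 * G.levels →
      Y (edgeVars G Q ∪ fvars G s hs P) ≤ Y (edgeVars G (Q ∪ P)) := by
  intro P
  induction P using Finset.induction_on with
  | empty => intro _ Q _; rw [fvars_empty, Finset.union_empty, Finset.union_empty]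
  | @insert a P ha ih =>
    intro hPE Q hcard
    have haE : a ∈ G.E := hPE a (Finset.mem_insert_self _ _)
    have hcardP : (insert a P).card = P.card + 1 := Finset.card_insert_of_notMem ha
    have h1 : edgeVars G Q ∪ fvars G s hs (insert a P)
        = insert (fvar G s hs ⟨a, haE⟩) (edgeVars G Q ∪ fvars G s hs P) := by
      rw [fvars_insert' a haE, Finset.union_insert]
    have hcard0 : (edgeVars G Q ∪ fvars G s hs P).card ≤ 2 * G.levels := by
      have hh1 := edgeVars_card (G := G) Q
      have hh2 := fvars_card (G := G) (s := s) (hs := hs) P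
      have hh3 := Finset.card_union_le (edgeVars G Q) (fvars G s hs P)
      omega
    have hc := capacity hY hs ⟨a, haE⟩ hcard0
    have h2 : insert (Sum.inl (⟨a, haE⟩ : Esub G) : DSTVar G)
          (edgeVars G Q ∪ fvars G s hs P)
        = edgeVars G (insert a Q) ∪ fvars G s hs P := by
      rw [edgeVars_insert' a haE]; exact (Finset.insert_union _ _ _).symm
    have hih := ih (fun e he => hPE e (Finset.mem_insert_of_mem he)) (insert a Q) (by
      have := Finset.card_insert_le a Q
      omega)
    have h3 : insert a Q ∪ P = Q ∪ insert a P := by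
      rw [Finset.insert_union, Finset.union_insert]
    rw [h1]
    rw [h2] at hc
    calc Y (insert (fvar G s hs ⟨a, haE⟩) (edgeVars G Q ∪ fvars G s hs P))
        ≤ Y (edgeVars G (insert a Q) ∪ fvars G s hs P) := hc
      _ ≤ Y (edgeVars G (insert a Q ∪ P)) := hih
      _ = Y (edgeVars G (Q ∪ insert a P)) := by rw [h3]

end DSTProof
namespace DSTProof
open Finset
variable {V : Type*} [Fintype V] [DecidableEq V] {G : DSTInstance V}
variable {Y : Finset (DSTVar G) → ℝ}

lemma sum_nested_eq {α β : Type*} [Fintype α] [Fintype β]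
    (p : α → Prop) (q : α → β → Prop) [DecidablePred p] [∀ a, DecidablePred (q a)]
    (f : α → β → ℝ) :
    ∑ x ∈ univ.filter p, ∑ y ∈ univ.filter (q x), f x y
      = ∑ z ∈ univ.filter (fun z : α × β => p z.1 ∧ q z.1 z.2), f z.1 z.2 := by
  simp only [Finset.sum_filter, Fintype.sum_prod_type]
  apply Finset.sum_congr rfl
  intro x _
  by_cases h : p x
  · simp [h]
  · simp [h]

open Classical in
lemma split (k : ℕ) (g : Finset (V × V) → ℝ) :
    ∑ v ∈ univ.filter (fun v => G.level v = k + 1),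
      ∑ P ∈ univ.filter (fun P => IsRPath G P v), g P
    = ∑ u ∈ univ.filter (fun u => G.level u = k),
        ∑ P₀ ∈ univ.filter (fun P => IsRPath G P u),
          ∑ e ∈ univ.filter (fun e : Esub G => e.1.1 = u), g (insert e.1 P₀) := by
  have h1 : ∀ u : V,
      (∑ P₀ ∈ univ.filter (fun P => IsRPath G P u),
        ∑ e ∈ univ.filter (fun e : Esub G => e.1.1 = u), g (insert e.1 P₀))
      = ∑ w ∈ univ.filter (fun w : Finset (V × V) × Esub G =>
          IsRPath G w.1 u ∧ w.2.1.1 = u), g (insert w.2.1 w.1) :=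
    fun u => sum_nested_eq _ _ _
  rw [Finset.sum_congr rfl (fun u _ => h1 u), sum_nested_eq, sum_nested_eq]
  refine (Finset.sum_bij
    (i := fun (z : V × (Finset (V × V) × Esub G)) (_ : z ∈ univ.filter
        (fun z => G.level z.1 = k ∧ (IsRPath G z.2.1 z.1 ∧ z.2.2.1.1 = z.1))) =>
      ((z.2.2.1.2 , insert z.2.2.1 z.2.1) : V × Finset (V × V)))
    ?_ ?_ ?_ ?_).symm
  · -- maps into target
    rintro ⟨u, P₀, e⟩ hz
    simp only [Finset.mem_filter, mem_univ, true_and] at hz ⊢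
    obtain ⟨hlu, hP₀, hel⟩ := hz
    have heE : (e.1.1, e.1.2) ∈ G.E := by rw [Prod.mk.eta]; exact e.2
    have hlev := G.edge_level e.1 e.2
    rw [hel] at hlev
    constructor
    · omega
    · have hpath : IsRPath G P₀ e.1.1 := by rw [hel]; exact hP₀
      have := IsRPath.cons hpath heE
      rwa [Prod.mk.eta] at this
  · -- injective
    rintro ⟨u, P₀, e⟩ hz ⟨u', P₀', e'⟩ hz' heq
    simp only [Finset.mem_filter, mem_univ, true_and] at hz hz'
    obtain ⟨hlu, hP₀, hel⟩ := hz
    obtain ⟨hlu', hP₀', hel'⟩ := hz'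
    simp only [Prod.mk.injEq] at heq
    obtain ⟨hv, hins⟩ := heq
    have hP₀u : IsRPath G P₀ e.1.1 := by rw [hel]; exact hP₀
    have hP₀u' : IsRPath G P₀' e'.1.1 := by rw [hel']; exact hP₀'
    have heE : (e.1.1, e.1.2) ∈ G.E := by rw [Prod.mk.eta]; exact e.2
    have heE' : (e'.1.1, e'.1.2) ∈ G.E := by rw [Prod.mk.eta]; exact e'.2
    have hins2 : insert (e.1.1, e.1.2) P₀ = insert (e'.1.1, e.1.2) P₀' := by
      rw [Prod.mk.eta, hv, Prod.mk.eta]; exact hins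
    have huni := path_unique_ins hP₀u hP₀u' heE (by rw [← hv] at heE'; exact heE') hins2
    have he : e = e' := by
      apply Subtype.ext
      have : (e.1.1, e.1.2) = (e'.1.1, e'.1.2) := by rw [huni.1, hv]
      rwa [Prod.mk.eta, Prod.mk.eta] at this
    have hu : u = u' := by rw [← hel, ← hel', he]
    simp [hu, huni.2, he]
  · -- surjective
    rintro ⟨v, P⟩ hq
    simp only [Finset.mem_filter, mem_univ, true_and] at hq
    obtain ⟨hlv, hP⟩ := hq
    have hvr : v ≠ G.r := fun h => by rw [h, level_r] at hlv; omega
    obtain ⟨u, P₀, hP₀, he, hnm, rfl⟩ := path_last hP hvr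
    have hlu : G.level u = k := by have := G.edge_level (u, v) he; simp only at this; omega
    refine ⟨(u, P₀, ⟨(u, v), he⟩), ?_, rfl⟩
    simp only [Finset.mem_filter, mem_univ, true_and]
    exact ⟨hlu, hP₀, trivial⟩
  · rintro ⟨u, P₀, e⟩ _
    rfl

open Classical in
lemma flowSum (hY : IsLasserre (dstA G) (dstb G) (2 * G.levels) Y)
    {s : V} (hs : s ∈ G.X) {I : Finset (DSTVar G)} (hI : I.card ≤ G.levels) :
    ∑ P ∈ univ.filter (fun P : Finset (V × V) => IsRPath G P s),
      Y (I ∪ fvars G s hs P) = Y I := by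
  have hsl : G.level s = G.levels := (G.level_terminal s).2 hs
  have main : ∀ k, k ≤ G.levels →
      ∑ v ∈ univ.filter (fun v => G.level v = k),
        ∑ P ∈ univ.filter (fun P => IsRPath G P v), Y (I ∪ fvars G s hs P) = Y I := by
    intro k
    induction k with
    | zero =>
      intro _
      have hset : univ.filter (fun v => G.level v = 0) = {G.r} := by
        ext v; simp [G.level_root]
      rw [hset, Finset.sum_singleton]
      have hset2 : univ.filter (fun P : Finset (V × V) => IsRPath G P G.r) = {∅} := by
        ext P
        simp only [Finset.mem_filter, mem_univ, true_and, Finset.mem_singleton]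
        exact ⟨path_root, fun h => h ▸ IsRPath.nil⟩
      rw [hset2, Finset.sum_singleton, fvars_empty, Finset.union_empty]
    | succ k ih =>
      intro hk1
      rw [split k, ← ih (by omega)]
      apply Finset.sum_congr rfl
      intro u hu
      apply Finset.sum_congr rfl
      intro P₀ hP₀
      have hu' : G.level u = k := (Finset.mem_filter.1 hu).2
      have hP₀' : IsRPath G P₀ u := (Finset.mem_filter.1 hP₀).2
      have hJcard : (I ∪ fvars G s hs P₀).card ≤ 2 * G.levels := by
        have hh1 := fvars_card (G := G) (s := s) (hs := hs) P₀
        have hh2 := Finset.card_union_le I (fvars G s hs P₀)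
        have hh3 := path_card hP₀'
        have hh4 := G.level_le u
        omega
      have hterm : ∀ e ∈ univ.filter (fun e : Esub G => e.1.1 = u),
          Y (I ∪ fvars G s hs (insert e.1 P₀))
            = Y (insert (fvar G s hs e) (I ∪ fvars G s hs P₀)) := by
        intro e _
        rw [fvars_insert, Finset.union_insert]
      rw [Finset.sum_congr rfl hterm]
      refine stepOut hY hs hJcard u ?_ ?_
      · intro hus
        rw [hus, hsl] at hu'
        omega
      · by_cases hur : u = G.r
        · exact Or.inl hur
        · obtain ⟨u₀, P₁, hP₁, he, hnm, rfl⟩ := path_last hP₀' hur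
          exact Or.inr ⟨⟨(u₀, u), he⟩, rfl,
            Finset.mem_union_right _ (fvar_mem_fvars (Finset.mem_insert_self _ _))⟩
  have hsingle : ∑ v ∈ univ.filter (fun v => G.level v = G.levels),
      ∑ P ∈ univ.filter (fun P => IsRPath G P v), Y (I ∪ fvars G s hs P)
      = ∑ P ∈ univ.filter (fun P => IsRPath G P s), Y (I ∪ fvars G s hs P) := by
    apply Finset.sum_eq_single_of_mem
    · simp only [Finset.mem_filter, Finset.mem_univ, true_and]
      exact hsl
    · intro v hv hvs
      apply Finset.sum_eq_zero
      intro P hP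
      refine term_kill hY hs hvs ((Finset.mem_filter.1 hv).2) ((Finset.mem_filter.1 hP).2) ?_
      have hh1 := fvars_card (G := G) (s := s) (hs := hs) P
      have hh2 := Finset.card_union_le I (fvars G s hs P)
      have hh3 := path_card ((Finset.mem_filter.1 hP).2)
      have hh4 := G.level_le v
      omega
  rw [← main G.levels le_rfl, hsingle]

end DSTProof
open Finset DSTProof in
open Classical in
theorem sum_paths_to_terminal' {V : Type*} [Fintype V] [DecidableEq V]
    (G : DSTInstance V) (Y : Finset (DSTVar G) → ℝ)
    (hY : IsLasserre (dstA G) (dstb G) (2 * G.levels) Y)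
    (s : V) (hs : s ∈ G.X) :
    (∑ P ∈ Finset.univ.filter (fun P : Finset (V × V) => IsRPath G P s),
        Y (edgeVars G P)) = 1 ∧
    ∀ (v : V) (P' : Finset (V × V)), IsRPath G P' v →
      ∑ P ∈ Finset.univ.filter (fun P : Finset (V × V) => IsRPath G P s ∧ P' ⊆ P),
        Y (edgeVars G P) ≤ Y (edgeVars G P') := by
  have hsl : G.level s = G.levels := (G.level_terminal s).2 hs
  have hb : ∀ (v : V) (P' : Finset (V × V)), IsRPath G P' v →
      ∑ P ∈ Finset.univ.filter (fun P : Finset (V × V) => IsRPath G P s ∧ P' ⊆ P),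
        Y (edgeVars G P) ≤ Y (edgeVars G P') := by
    intro v P' hP'
    have hcardP' : P'.card = G.level v := path_card hP'
    have hIcard : (edgeVars G P').card ≤ G.levels := by
      have h1 := edgeVars_card (G := G) P'
      have h2 := G.level_le v
      omega
    have key : ∀ P ∈ univ.filter (fun P : Finset (V × V) => IsRPath G P s ∧ P' ⊆ P),
        Y (edgeVars G P) ≤ Y (edgeVars G P' ∪ fvars G s hs P) := by
      intro P hP
      obtain ⟨hPs, hsub⟩ := (Finset.mem_filter.1 hP).2
      have hcardP : P.card = G.levels := by rw [path_card hPs, hsl]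
      have hback := back hY hs hPs (edgeVars G P)
        (by have := edgeVars_card (G := G) P; omega)
        (fun e he => yvar_mem_edgeVars he)
        (Or.inl rfl)
      have hBcard : (edgeVars G P ∪ fvars G s hs P).card ≤ 2 * G.levels + 1 := by
        have h1 := edgeVars_card (G := G) P
        have h2 := fvars_card (G := G) (s := s) (hs := hs) P
        have h3 := Finset.card_union_le (edgeVars G P) (fvars G s hs P)
        omega
      have hmono := mono hY
        (A := edgeVars G P' ∪ fvars G s hs P)
        (B := edgeVars G P ∪ fvars G s hs P)
        (Finset.union_subset_union (edgeVars_mono hsub) (Finset.Subset.refl _)) hBcard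
      linarith
    have hstep1 := Finset.sum_le_sum key
    have hsub2 : univ.filter (fun P : Finset (V × V) => IsRPath G P s ∧ P' ⊆ P)
        ⊆ univ.filter (fun P : Finset (V × V) => IsRPath G P s) := by
      intro P hP
      simp only [Finset.mem_filter] at hP ⊢
      exact ⟨hP.1, hP.2.1⟩
    have hstep2 := Finset.sum_le_sum_of_subset_of_nonneg
        (f := fun P => Y (edgeVars G P' ∪ fvars G s hs P)) hsub2 (by
      intro P hP _
      have hPs : IsRPath G P s := (Finset.mem_filter.1 hP).2
      refine nonneg hY ?_
      have h1 := edgeVars_card (G := G) P'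
      have h2 := fvars_card (G := G) (s := s) (hs := hs) P
      have h3 := Finset.card_union_le (edgeVars G P') (fvars G s hs P)
      have h4 := path_card hPs
      have h5 := G.level_le v
      omega)
    have hflow := flowSum hY hs (I := edgeVars G P') hIcard
    calc ∑ P ∈ univ.filter (fun P : Finset (V × V) => IsRPath G P s ∧ P' ⊆ P),
          Y (edgeVars G P)
        ≤ ∑ P ∈ univ.filter (fun P : Finset (V × V) => IsRPath G P s ∧ P' ⊆ P),
          Y (edgeVars G P' ∪ fvars G s hs P) := hstep1
      _ ≤ ∑ P ∈ univ.filter (fun P : Finset (V × V) => IsRPath G P s),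
          Y (edgeVars G P' ∪ fvars G s hs P) := hstep2
      _ = Y (edgeVars G P') := hflow
  refine ⟨?_, hb⟩
  have hle : (∑ P ∈ univ.filter (fun P : Finset (V × V) => IsRPath G P s),
      Y (edgeVars G P)) ≤ 1 := by
    have h1 := hb G.r ∅ IsRPath.nil
    have hfe : univ.filter (fun P : Finset (V × V) => IsRPath G P s ∧ ∅ ⊆ P)
        = univ.filter (fun P : Finset (V × V) => IsRPath G P s) := by
      apply Finset.filter_congr
      intro P _
      simp
    rw [hfe, edgeVars_empty, hY.1] at h1
    exact h1
  have hge : (1 : ℝ) ≤ ∑ P ∈ univ.filter (fun P : Finset (V × V) => IsRPath G P s),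
      Y (edgeVars G P) := by
    have hflow := flowSum hY hs (I := (∅ : Finset (DSTVar G))) (by simp)
    have hterm : ∀ P ∈ univ.filter (fun P : Finset (V × V) => IsRPath G P s),
        Y ((∅ : Finset (DSTVar G)) ∪ fvars G s hs P) ≤ Y (edgeVars G P) := by
      intro P hP
      have hPs : IsRPath G P s := (Finset.mem_filter.1 hP).2
      have hPE : ∀ e ∈ P, e ∈ G.E := fun e he => (path_mem hPs e he).1
      have hcardP : P.card = G.levels := by rw [path_card hPs, hsl]
      have hsw := swap hY hs P hPE ∅ (by simp; omega)
      rw [edgeVars_empty, Finset.empty_union, Finset.empty_union] at hsw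
      rw [Finset.empty_union]
      exact hsw
    have := Finset.sum_le_sum hterm
    rw [hflow, hY.1] at this
    exact this
  linarith
open Classical in
/-- For a level-`2ℓ` Lasserre solution `Y` of the Directed Steiner Tree LP on an `ℓ`-level
graph and a terminal `s`: (a) `Σ_{P ∈ Q(s)} y_P = 1`; (b) for every vertex `v` and every
`r`–`v` path `P'`, `Σ_{P ∈ Q(s) : P' ⊆ P} y_P ≤ y_{P'}`. -/
theorem sum_paths_to_terminal (G : DSTInstance V) (Y : Finset (DSTVar G) → ℝ)
    (hY : IsLasserre (dstA G) (dstb G) (2 * G.levels) Y)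
    (s : V) (hs : s ∈ G.X) :
    (∑ P ∈ Finset.univ.filter (fun P : Finset (V × V) => IsRPath G P s),
        Y (edgeVars G P)) = 1 ∧
    ∀ (v : V) (P' : Finset (V × V)), IsRPath G P' v →
      ∑ P ∈ Finset.univ.filter (fun P : Finset (V × V) => IsRPath G P s ∧ P' ⊆ P),
        Y (edgeVars G P) ≤ Y (edgeVars G P') := by
  exact sum_paths_to_terminal' G Y hY s hs
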